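/- arXiv:2011.10730 — 5 statements merged into one kernel-verified Lean document; each statement's English description precedes it below -/
import Mathlib

section
/- Let m, n ≥ 1. Let u₁, …, u_{m+1} ∈ ℝᵐ, F₁, …, F_{m+1} ∈ ℝⁿ, and ε₁, …, ε_{m+1} ≥ 0. Suppose the m+1 vectors (uᵢᵀ, 1)ᵀ ∈ ℝ^{m+1}, i = 1, …, m+1, are linearly independent. Then the set { (A, b) ∈ ℝ^{n×m} × ℝⁿ : ‖A uᵢ + b − Fᵢ‖₂ ≤ εᵢ for all i = 1, …, m+1 } is bounded. -/
/-- The Euclidean norm on `Fin n → ℝ`. -/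
noncomputable def e2norm {n : ℕ} (v : Fin n → ℝ) : ℝ :=
  Real.sqrt (∑ j, v j ^ 2)

/-- Matrix–vector multiplication for an `n × m` real matrix represented as
`Fin n → Fin m → ℝ`. -/
def matVec {n m : ℕ} (A : Fin n → Fin m → ℝ) (v : Fin m → ℝ) : Fin n → ℝ :=
  fun j => ∑ k, A j k * v k

lemma abs_le_e2norm {n : ℕ} (v : Fin n → ℝ) (j : Fin n) : |v j| ≤ e2norm v := by
  rw [e2norm, ← Real.sqrt_sq_eq_abs]
  exact Real.sqrt_le_sqrt (Finset.single_le_sum (f := fun k => v k ^ 2)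
    (fun k _ => sq_nonneg _) (Finset.mem_univ j))

/-- **Lemma 1 (Bounded Uncertainty Sets).** If the `m+1` vectors `(uᵢᵀ, 1)ᵀ ∈ ℝ^{m+1}`
are linearly independent, then the set of pairs `(A, b)` with
`‖A uᵢ + b − Fᵢ‖₂ ≤ εᵢ` for all `i` is bounded. -/
theorem bounded_uncertainty_set (m n : ℕ) (hm : 1 ≤ m) (hn : 1 ≤ n)
    (u : Fin (m + 1) → Fin m → ℝ) (F : Fin (m + 1) → Fin n → ℝ)
    (ε : Fin (m + 1) → ℝ) (hε : ∀ i, 0 ≤ ε i)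
    (hli : LinearIndependent ℝ (fun i => (Fin.snoc (u i) 1 : Fin (m + 1) → ℝ))) :
    Bornology.IsBounded
      {Ab : (Fin n → Fin m → ℝ) × (Fin n → ℝ) |
        ∀ i, e2norm (fun j => matVec Ab.1 (u i) j + Ab.2 j - F i j) ≤ ε i} := by
  -- the linear map (A, b) ↦ (i, j) ↦ (A uᵢ + b) j
  set T : ((Fin n → Fin m → ℝ) × (Fin n → ℝ)) →ₗ[ℝ] (Fin (m + 1) → Fin n → ℝ) :=
    { toFun := fun Ab => fun i j => matVec Ab.1 (u i) j + Ab.2 j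
      map_add' := by
        intro x y
        funext i j
        simp [matVec, Finset.sum_add_distrib, add_mul]
        ring
      map_smul' := by
        intro c x
        funext i j
        simp [matVec, Finset.mul_sum, mul_add, mul_assoc] } with hT
  -- the snoc vectors span everything
  have hspan : Submodule.span ℝ
      (Set.range fun i => (Fin.snoc (u i) 1 : Fin (m + 1) → ℝ)) = ⊤ := by
    apply hli.span_eq_top_of_card_eq_finrank
    simp
  -- T is injective
  have hker : LinearMap.ker T = ⊥ := by
    rw [LinearMap.ker_eq_bot']
    rintro ⟨A, b⟩ h
    have h' : ∀ i j, matVec A (u i) j + b j = 0 := fun i j => congrFun (congrFun h i) j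
    have key : ∀ j : Fin n, (Fin.snoc (A j) (b j) : Fin (m + 1) → ℝ) = 0 := by
      intro j
      set w : Fin (m + 1) → ℝ := Fin.snoc (A j) (b j) with hw
      let φ : (Fin (m + 1) → ℝ) →ₗ[ℝ] ℝ :=
        { toFun := fun x => ∑ k, x k * w k
          map_add' := by intro x y; simp [add_mul, Finset.sum_add_distrib]
          map_smul' := by intro c x; simp [Finset.mul_sum, mul_assoc]
        }
      have hφ : φ = 0 := by
        apply LinearMap.ext_on hspan
        rintro x ⟨i, rfl⟩
        have : ∑ k, (Fin.snoc (u i) 1 : Fin (m + 1) → ℝ) k * w k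
            = matVec A (u i) j + b j := by
          rw [Fin.sum_univ_castSucc]
          simp [hw, matVec, mul_comm]
        simpa [φ, this] using h' i j
      funext l
      have := congrFun (congrArg (fun f => f.toFun) hφ) (Pi.single l 1)
      simpa [φ, Pi.single_apply, Finset.sum_ite_eq] using this
    have hA : A = 0 := by
      funext j k
      have := congrFun (key j) (Fin.castSucc k)
      simpa using this
    have hb : b = 0 := by
      funext j
      have := congrFun (key j) (Fin.last m)
      simpa using this
    simp [hA, hb, Prod.ext_iff]
  obtain ⟨K, -, hK⟩ := T.exists_antilipschitzWith hker
  -- the set is contained in a preimage of a bounded set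
  set C : ℝ := ∑ i, ε i with hC
  have hCε : ∀ i, ε i ≤ C := fun i =>
    Finset.single_le_sum (fun k _ => hε k) (Finset.mem_univ i)
  have hC0 : 0 ≤ C := Finset.sum_nonneg fun i _ => hε i
  apply Bornology.IsBounded.subset
    (hK.isBounded_preimage (Metric.isBounded_closedBall (x := F) (r := C)))
  rintro ⟨A, b⟩ hAb
  simp only [Set.mem_preimage, Metric.mem_closedBall]
  rw [dist_pi_le_iff hC0]
  intro i
  rw [dist_pi_le_iff hC0]
  intro j
  have h1 := hAb i
  have h2 := abs_le_e2norm (fun j => matVec A (u i) j + b j - F i j) j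
  simp only [Real.dist_eq]
  calc |T (A, b) i j - F i j| ≤ ε i := by
        simpa [hT] using h2.trans h1
    _ ≤ C := hCε i
end

section
/- Let m, n ≥ 1. Let u₁, …, u_{m+1} ∈ ℝᵐ, F₁, …, F_{m+1} ∈ ℝⁿ, and ε₁, …, ε_{m+1} ≥ 0, and suppose the m+1 vectors (uᵢᵀ, 1)ᵀ ∈ ℝ^{m+1} are linearly independent, so that the (m+1)×(m+1) matrix U whose i-th row is (uᵢᵀ, 1) is invertible. Then every pair (A, b) ∈ ℝ^{n×m} × ℝⁿ satisfying ‖A uᵢ + b − Fᵢ‖₂ ≤ εᵢ for all i = 1, …, m+1 obeys the quantitative bound √(‖A‖_F² + ‖b‖₂²) ≤ ‖U⁻¹‖₂ · ( √(∑_{i=1}^{m+1} εᵢ²) + √(∑_{i=1}^{m+1} ‖Fᵢ‖₂²) ), where ‖·‖_F is the Frobenius norm of a matrix and ‖U⁻¹‖₂ is the operator norm of U⁻¹ induced by the Euclidean norm. -/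
/-- The quantitative bound in the proof of Lemma 1 (Bounded Uncertainty Sets): if the
vectors `(uᵢᵀ, 1)ᵀ` are linearly independent (so the matrix `U` with these rows is
invertible), then any `(A, b)` with `‖A uᵢ + b − Fᵢ‖₂ ≤ εᵢ` for all `i` satisfies
`√(‖A‖_F² + ‖b‖₂²) ≤ ‖U⁻¹‖₂ (√(∑ εᵢ²) + √(∑ ‖Fᵢ‖₂²))`. -/
theorem uncertainty_set_quantitative_bound (m n : ℕ) (hm : 1 ≤ m) (hn : 1 ≤ n)
    (u : Fin (m + 1) → Fin m → ℝ) (F : Fin (m + 1) → Fin n → ℝ)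
    (ε : Fin (m + 1) → ℝ) (hε : ∀ i, 0 ≤ ε i)
    (U : Matrix (Fin (m + 1)) (Fin (m + 1)) ℝ)
    (hU : U = Matrix.of fun i => (Fin.snoc (u i) 1 : Fin (m + 1) → ℝ))
    (hli : LinearIndependent ℝ (fun i => (Fin.snoc (u i) 1 : Fin (m + 1) → ℝ)))
    (A : Fin n → Fin m → ℝ) (b : Fin n → ℝ)
    (hAb : ∀ i, e2norm (fun j => matVec A (u i) j + b j - F i j) ≤ ε i) :
    Real.sqrt ((∑ j, ∑ k, A j k ^ 2) + ∑ j, b j ^ 2) ≤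
      ‖Matrix.toEuclideanCLM (𝕜 := ℝ) U⁻¹‖ *
        (Real.sqrt (∑ i, ε i ^ 2) + Real.sqrt (∑ i, ∑ j, F i j ^ 2)) := by
  classical
  set N : ℝ := ‖Matrix.toEuclideanCLM (𝕜 := ℝ) U⁻¹‖ with hN
  have hN0 : 0 ≤ N := norm_nonneg _
  -- the "data" matrix g i j = (A uᵢ + b)_j
  set g : Fin (m + 1) → Fin n → ℝ := fun i j => matVec A (u i) j + b j with hg
  have hUunit : IsUnit U := by
    rw [← Matrix.linearIndependent_rows_iff_isUnit]
    subst hU; exact hli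
  -- columns: c j = snoc (A j) (b j) satisfies U.mulVec (c j) = fun i => g i j
  have hcol : ∀ j : Fin n,
      U.mulVec (Fin.snoc (A j) (b j)) = fun i => g i j := by
    intro j
    funext i
    subst hU
    simp only [Matrix.mulVec, Matrix.of_apply, dotProduct, hg, matVec]
    rw [Fin.sum_univ_castSucc]
    simp [Fin.snoc_castSucc, Fin.snoc_last, mul_comm]
  have hcolinv : ∀ j : Fin n,
      (Fin.snoc (A j) (b j) : Fin (m + 1) → ℝ) = U⁻¹.mulVec (fun i => g i j) := by
    intro j
    rw [← hcol j, Matrix.mulVec_mulVec, Matrix.nonsing_inv_mul U ((Matrix.isUnit_iff_isUnit_det U).mp hUunit), Matrix.one_mulVec]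
  -- norm bound per column
  have hcolbound : ∀ j : Fin n,
      (∑ k, A j k ^ 2) + b j ^ 2 ≤ N ^ 2 * ∑ i, g i j ^ 2 := by
    intro j
    have h1 : ‖((WithLp.equiv 2 (Fin (m+1) → ℝ)).symm
        (Fin.snoc (A j) (b j)) : EuclideanSpace ℝ (Fin (m+1)))‖ ≤
        N * ‖((WithLp.equiv 2 (Fin (m+1) → ℝ)).symm
          (fun i => g i j) : EuclideanSpace ℝ (Fin (m+1)))‖ := by
      rw [hcolinv j, ← Matrix.toLin'_apply,
        Matrix.toLin'_apply, WithLp.equiv_symm_apply, ← Matrix.toEuclideanCLM_toLp (𝕜 := ℝ)]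
      exact (Matrix.toEuclideanCLM (𝕜 := ℝ) U⁻¹).le_opNorm _
    have h2 : ∀ (v : Fin (m+1) → ℝ),
        ‖((WithLp.equiv 2 (Fin (m+1) → ℝ)).symm v : EuclideanSpace ℝ (Fin (m+1)))‖
          = Real.sqrt (∑ i, v i ^ 2) := by
      intro v
      rw [EuclideanSpace.norm_eq]
      congr 1
      refine Finset.sum_congr rfl fun i _ => ?_
      simp [Real.norm_eq_abs, sq_abs]
    rw [h2, h2] at h1
    have h3 : (∑ i, (Fin.snoc (A j) (b j) : Fin (m+1) → ℝ) i ^ 2)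
        = (∑ k, A j k ^ 2) + b j ^ 2 := by
      rw [Fin.sum_univ_castSucc]; simp
    have h4 : Real.sqrt ((∑ k, A j k ^ 2) + b j ^ 2) ≤ N * Real.sqrt (∑ i, g i j ^ 2) := by
      rw [← h3]; exact h1
    have h5 : (0:ℝ) ≤ (∑ k, A j k ^ 2) + b j ^ 2 := by positivity
    calc (∑ k, A j k ^ 2) + b j ^ 2
        = Real.sqrt ((∑ k, A j k ^ 2) + b j ^ 2) ^ 2 := (Real.sq_sqrt h5).symm
      _ ≤ (N * Real.sqrt (∑ i, g i j ^ 2)) ^ 2 := by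
          apply pow_le_pow_left₀ (Real.sqrt_nonneg _) h4
      _ = N ^ 2 * ∑ i, g i j ^ 2 := by
          rw [mul_pow, Real.sq_sqrt (by positivity)]
  -- sum over columns
  have hsum : (∑ j, ∑ k, A j k ^ 2) + ∑ j, b j ^ 2 ≤ N ^ 2 * ∑ i, ∑ j, g i j ^ 2 := by
    rw [← Finset.sum_add_distrib, Finset.sum_comm (f := fun i j => g i j ^ 2),
      Finset.mul_sum]
    exact Finset.sum_le_sum fun j _ => hcolbound j
  have hstep1 : Real.sqrt ((∑ j, ∑ k, A j k ^ 2) + ∑ j, b j ^ 2)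
      ≤ N * Real.sqrt (∑ i, ∑ j, g i j ^ 2) := by
    calc Real.sqrt ((∑ j, ∑ k, A j k ^ 2) + ∑ j, b j ^ 2)
        ≤ Real.sqrt (N ^ 2 * ∑ i, ∑ j, g i j ^ 2) := Real.sqrt_le_sqrt hsum
      _ = N * Real.sqrt (∑ i, ∑ j, g i j ^ 2) := by
          rw [Real.sqrt_mul (by positivity), Real.sqrt_sq hN0]
  -- triangle inequality in the big Euclidean space
  have htri : Real.sqrt (∑ i, ∑ j, g i j ^ 2)
      ≤ Real.sqrt (∑ i, ε i ^ 2) + Real.sqrt (∑ i, ∑ j, F i j ^ 2) := by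
    have hnorm : ∀ (w : Fin (m+1) → Fin n → ℝ),
        ‖((WithLp.equiv 2 (Fin (m+1) × Fin n → ℝ)).symm (fun p => w p.1 p.2) :
            EuclideanSpace ℝ (Fin (m+1) × Fin n))‖
          = Real.sqrt (∑ i, ∑ j, w i j ^ 2) := by
      intro w
      rw [EuclideanSpace.norm_eq]
      congr 1
      simp only [WithLp.equiv_symm_apply, WithLp.ofLp_toLp, Real.norm_eq_abs, sq_abs]
      rw [Fintype.sum_prod_type]
    set x : EuclideanSpace ℝ (Fin (m+1) × Fin n) :=
      (WithLp.equiv 2 (Fin (m+1) × Fin n → ℝ)).symm (fun p => g p.1 p.2 - F p.1 p.2)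
    set y : EuclideanSpace ℝ (Fin (m+1) × Fin n) :=
      (WithLp.equiv 2 (Fin (m+1) × Fin n → ℝ)).symm (fun p => F p.1 p.2)
    have hxy : x + y = (WithLp.equiv 2 (Fin (m+1) × Fin n → ℝ)).symm
        (fun p => g p.1 p.2) := by
      ext p
      simp [x, y]
    have h1 : ‖x + y‖ ≤ ‖x‖ + ‖y‖ := norm_add_le x y
    rw [hxy] at h1
    have hx : ‖x‖ ≤ Real.sqrt (∑ i, ε i ^ 2) := by
      have := hnorm (fun i j => g i j - F i j)
      rw [show x = (WithLp.equiv 2 (Fin (m+1) × Fin n → ℝ)).symm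
          (fun p => (fun i j => g i j - F i j) p.1 p.2) from rfl, this]
      apply Real.sqrt_le_sqrt
      refine Finset.sum_le_sum fun i _ => ?_
      have hi := hAb i
      unfold e2norm at hi
      have : ∑ j, (g i j - F i j) ^ 2 ≤ ε i ^ 2 := by
        have h0 : (0:ℝ) ≤ ∑ j, (g i j - F i j) ^ 2 := by positivity
        calc ∑ j, (g i j - F i j) ^ 2
            = Real.sqrt (∑ j, (g i j - F i j) ^ 2) ^ 2 := (Real.sq_sqrt h0).symm
          _ ≤ ε i ^ 2 := pow_le_pow_left₀ (Real.sqrt_nonneg _) hi 2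
      exact this
    have hy : ‖y‖ = Real.sqrt (∑ i, ∑ j, F i j ^ 2) := hnorm F
    calc Real.sqrt (∑ i, ∑ j, g i j ^ 2)
        = ‖((WithLp.equiv 2 (Fin (m+1) × Fin n → ℝ)).symm (fun p => g p.1 p.2) :
            EuclideanSpace ℝ (Fin (m+1) × Fin n))‖ := (hnorm g).symm
      _ ≤ ‖x‖ + ‖y‖ := h1
      _ ≤ Real.sqrt (∑ i, ε i ^ 2) + Real.sqrt (∑ i, ∑ j, F i j ^ 2) := by
          rw [hy]; exact add_le_add_left hx _
  calc Real.sqrt ((∑ j, ∑ k, A j k ^ 2) + ∑ j, b j ^ 2)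
      ≤ N * Real.sqrt (∑ i, ∑ j, g i j ^ 2) := hstep1
    _ ≤ N * (Real.sqrt (∑ i, ε i ^ 2) + Real.sqrt (∑ i, ∑ j, F i j ^ 2)) :=
        mul_le_mul_of_nonneg_left htri hN0
end

section
/- (Weak duality in Theorem 1.) Let n, m, N ≥ 1, c ∈ ℝⁿ, u ∈ ℝᵐ, and for each i = 1, …, N let uᵢ ∈ ℝᵐ, Fᵢ ∈ ℝⁿ, εᵢ ≥ 0. Suppose λ₁, …, λ_N ∈ ℝⁿ satisfy ∑_{i=1}^N λᵢ uᵢᵀ = −c uᵀ (an equality of n×m matrices, where λᵢ uᵢᵀ denotes the outer product) and ∑_{i=1}^N λᵢ = −c. Then for every (A, b) ∈ ℝ^{n×m} × ℝⁿ satisfying ‖A uᵢ + b − Fᵢ‖₂ ≤ εᵢ for all i = 1, …, N, one has ⟨c, b + A u⟩ ≤ −∑_{i=1}^N ( ⟨λᵢ, Fᵢ⟩ − ‖λᵢ‖₂ εᵢ ). -/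
lemma e2norm_eq {n : ℕ} (v : Fin n → ℝ) :
    e2norm v = ‖(WithLp.equiv 2 (Fin n → ℝ)).symm v‖ := by
  rw [EuclideanSpace.norm_eq, e2norm]
  congr 1
  exact Finset.sum_congr rfl fun j _ => by
    rw [WithLp.equiv_symm_apply, PiLp.toLp_apply, Real.norm_eq_abs, sq_abs]

lemma cs_sum {n : ℕ} (v w : Fin n → ℝ) :
    ∑ j, v j * w j ≤ e2norm v * e2norm w := by
  have h := abs_real_inner_le_norm
    ((WithLp.equiv 2 (Fin n → ℝ)).symm v) ((WithLp.equiv 2 (Fin n → ℝ)).symm w)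
  rw [PiLp.inner_apply] at h
  simp only [RCLike.inner_apply, conj_trivial, WithLp.equiv_symm_apply, PiLp.toLp_apply] at h
  rw [e2norm_eq, e2norm_eq]
  calc ∑ j, v j * w j ≤ |∑ j, v j * w j| := le_abs_self _
    _ ≤ _ := by simpa only [mul_comm, WithLp.equiv_symm_apply] using h

/-- **Weak duality in Theorem 1 (Robust Control Synthesis).**  If the multipliers
`λ₁, …, λ_N ∈ ℝⁿ` satisfy `∑ᵢ λᵢ uᵢᵀ = −c uᵀ` (an equality of `n × m` matrices, stated
entrywise) and `∑ᵢ λᵢ = −c`, then for every `(A, b)` in the uncertainty set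
(`‖A uᵢ + b − Fᵢ‖₂ ≤ εᵢ` for all `i`) one has
`⟨c, b + A u⟩ ≤ −∑ᵢ (⟨λᵢ, Fᵢ⟩ − ‖λᵢ‖₂ εᵢ)`. -/
theorem weak_duality_robust_synthesis (n m N : ℕ) (hn : 1 ≤ n) (hm : 1 ≤ m) (hN : 1 ≤ N)
    (c : Fin n → ℝ) (u : Fin m → ℝ)
    (us : Fin N → Fin m → ℝ) (F : Fin N → Fin n → ℝ) (ε : Fin N → ℝ) (hε : ∀ i, 0 ≤ ε i)
    (lam : Fin N → Fin n → ℝ)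
    (houter : ∀ j k, ∑ i, lam i j * us i k = -(c j * u k))
    (hsum : ∀ j, ∑ i, lam i j = -c j)
    (A : Fin n → Fin m → ℝ) (b : Fin n → ℝ)
    (hAb : ∀ i, e2norm (fun j => matVec A (us i) j + b j - F i j) ≤ ε i) :
    (∑ j, c j * (b j + matVec A u j)) ≤
      -∑ i, ((∑ j, lam i j * F i j) - e2norm (lam i) * ε i) := by
  -- Key identity: LHS = -∑ i, ⟨lam i, A (us i) + b⟩
  have key : (∑ j, c j * (b j + matVec A u j))
      = -∑ i, ∑ j, lam i j * (matVec A (us i) j + b j) := by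
    have : ∑ i, ∑ j, lam i j * (matVec A (us i) j + b j)
        = ∑ j, ∑ k, A j k * (∑ i, lam i j * us i k) + ∑ j, (∑ i, lam i j) * b j := by
      rw [Finset.sum_comm]
      rw [← Finset.sum_add_distrib]
      refine Finset.sum_congr rfl fun j _ => ?_
      simp only [mul_add, Finset.sum_add_distrib, matVec, Finset.mul_sum,
        Finset.sum_mul]
      congr 1
      rw [Finset.sum_comm]
      refine Finset.sum_congr rfl fun k _ => Finset.sum_congr rfl fun i _ => by ring
    rw [this]
    simp only [houter, hsum]
    simp only [matVec, mul_add, Finset.sum_add_distrib, Finset.mul_sum, mul_neg,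
      neg_mul, Finset.sum_neg_distrib, neg_add, neg_neg]
    rw [add_comm]
    congr 1
    refine Finset.sum_congr rfl fun j _ => Finset.sum_congr rfl fun k _ => by ring
  rw [key, neg_le_neg_iff]
  refine Finset.sum_le_sum fun i _ => ?_
  have h1 : ∑ j, lam i j * (matVec A (us i) j + b j)
      = ∑ j, lam i j * F i j
        + ∑ j, lam i j * (matVec A (us i) j + b j - F i j) := by
    rw [← Finset.sum_add_distrib]
    exact Finset.sum_congr rfl fun j _ => by ring
  rw [h1]
  have h2 : -∑ j, lam i j * (matVec A (us i) j + b j - F i j)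
      ≤ e2norm (lam i) * ε i := by
    have h3 := cs_sum (fun j => -lam i j) (fun j => matVec A (us i) j + b j - F i j)
    have h4 : e2norm (fun j => -lam i j) = e2norm (lam i) := by
      unfold e2norm; congr 1; exact Finset.sum_congr rfl fun j _ => by ring
    rw [h4] at h3
    calc -∑ j, lam i j * (matVec A (us i) j + b j - F i j)
        = ∑ j, (-lam i j) * (matVec A (us i) j + b j - F i j) := by
          rw [← Finset.sum_neg_distrib]
          exact Finset.sum_congr rfl fun j _ => by ring
      _ ≤ e2norm (lam i) * e2norm (fun j => matVec A (us i) j + b j - F i j) := h3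
      _ ≤ e2norm (lam i) * ε i := by
          apply mul_le_mul_of_nonneg_left (hAb i)
          rw [e2norm_eq]; exact norm_nonneg _
  linarith
end

section
/- (Sufficiency in Theorem 2.) Let m ≥ 1, let K ⊆ ℝᵐ × ℝ be a nonempty compact convex set, and let τ ∈ ℝ. Suppose that (0_m, q) ∉ K for every q ≥ τ. Then there exists u ∈ ℝᵐ such that q + ⟨p, u⟩ ≤ τ for all (p, q) ∈ K. -/
open scoped RealInnerProductSpace

/-- **Sufficiency in Theorem 2 (Feasibility of Data-Driven Robust Controller).**
If the nonempty compact convex set `K ⊆ ℝᵐ × ℝ` avoids the vertical ray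
`{0_m} × [τ, ∞)`, then some input `u ∈ ℝᵐ` satisfies the robust constraint
`q + ⟨p, u⟩ ≤ τ` for all `(p, q) ∈ K`. -/
theorem sufficiency_feasibility (m : ℕ) (hm : 1 ≤ m)
    (K : Set (EuclideanSpace ℝ (Fin m) × ℝ))
    (hne : K.Nonempty) (hcomp : IsCompact K) (hconv : Convex ℝ K) (τ : ℝ)
    (h : ∀ q : ℝ, τ ≤ q → ((0 : EuclideanSpace ℝ (Fin m)), q) ∉ K) :
    ∃ u : EuclideanSpace ℝ (Fin m),
      ∀ pq ∈ K, pq.2 + ⟪pq.1, u⟫ ≤ τ := by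
  have hdisj : Disjoint K ({(0 : EuclideanSpace ℝ (Fin m))} ×ˢ Set.Ici τ) := by
    rw [Set.disjoint_right]
    rintro ⟨p, q⟩ ⟨hp, hq⟩ hK
    simp only [Set.mem_singleton_iff] at hp
    subst hp
    exact h q hq hK
  obtain ⟨f, a, b, hKlt, hab, hray⟩ :=
    geometric_hahn_banach_compact_closed hconv hcomp
      ((convex_singleton _).prod (convex_Ici _))
      (isClosed_singleton.prod isClosed_Ici) hdisj
  set β : ℝ := f ((0 : EuclideanSpace ℝ (Fin m)), 1) with hβ
  have hfsplit : ∀ p : EuclideanSpace ℝ (Fin m), ∀ q : ℝ, f (p, q) = f (p, 0) + q * β := by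
    intro p q
    have : (p, q) = (p, (0 : ℝ)) + q • ((0 : EuclideanSpace ℝ (Fin m)), (1 : ℝ)) := by
      simp [Prod.ext_iff]
    rw [this, map_add, map_smul, smul_eq_mul]
  have hrayq : ∀ q : ℝ, τ ≤ q → b < q * β := by
    intro q hq
    have := hray ((0 : EuclideanSpace ℝ (Fin m)), q) (by simp [Set.mem_prod, hq])
    have h0 : f ((0 : EuclideanSpace ℝ (Fin m)), q) = q * β := by
      have := hfsplit 0 q; rw [show ((0 : EuclideanSpace ℝ (Fin m)), (0 : ℝ)) = 0 from rfl, map_zero, zero_add] at this; exact this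
    linarith [this, h0.symm.le]
  have hβ0 : 0 ≤ β := by
    by_contra hneg
    push_neg at hneg
    have hq : τ ≤ max τ (b / β) := le_max_left _ _
    have := hrayq _ hq
    have h2 : max τ (b / β) * β ≤ b := by
      have := le_max_right τ (b / β)
      calc max τ (b / β) * β ≤ (b / β) * β :=
            mul_le_mul_of_nonpos_right this hneg.le
        _ = b := div_mul_cancel₀ b (ne_of_lt hneg)
    linarith
  -- Riesz representation of p ↦ f (p, 0)
  set g : EuclideanSpace ℝ (Fin m) →L[ℝ] ℝ := f.comp (ContinuousLinearMap.inl ℝ (EuclideanSpace ℝ (Fin m)) ℝ) with hg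
  set w : EuclideanSpace ℝ (Fin m) := (InnerProductSpace.toDual ℝ (EuclideanSpace ℝ (Fin m))).symm g with hw
  have hwp : ∀ p : EuclideanSpace ℝ (Fin m), ⟪p, w⟫ = f (p, 0) := by
    intro p
    rw [real_inner_comm]
    exact InnerProductSpace.toDual_symm_apply
  rcases lt_or_eq_of_le hβ0 with hβpos | hβzero
  · -- β > 0 : take u = (1/β) • w
    refine ⟨(1 / β) • w, ?_⟩
    rintro ⟨p, q⟩ hpq
    have h1 : f (p, q) < a := hKlt _ hpq
    have h2 : b < τ * β := hrayq τ le_rfl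
    have h3 : f (p, 0) + q * β < τ * β := by
      rw [← hfsplit]; linarith
    have h4 : ⟪p, (1 / β) • w⟫ = (1 / β) * f (p, 0) := by
      rw [real_inner_smul_right, hwp]
    rw [h4, ← sub_nonneg]
    have key : τ - (q + 1 / β * f (p, 0)) = (τ * β - (f (p, 0) + q * β)) / β := by
      field_simp; ring
    rw [key]
    exact div_nonneg (by linarith) hβpos.le
  · -- β = 0 : then f (p,q) = f (p,0) < a < b < 0 on K
    have hb0 : b < 0 := by
      have := hrayq τ le_rfl
      rw [← hβzero] at this; linarith
    obtain ⟨⟨p₀, q₀⟩, hp₀K, hQ⟩ :=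
      hcomp.exists_isMaxOn hne continuous_snd.continuousOn
    set t : ℝ := max 0 ((q₀ - τ) / (-b)) with ht
    refine ⟨t • w, ?_⟩
    rintro ⟨p, q⟩ hpq
    have hgp : f (p, 0) < b := by
      have h1 : f (p, q) < a := hKlt _ hpq
      have := hfsplit p q
      rw [← hβzero] at this
      simp at this
      linarith
    have ht0 : 0 ≤ t := le_max_left _ _
    have htb : t * b ≤ τ - q₀ := by
      have h1 : (q₀ - τ) / (-b) ≤ t := le_max_right _ _
      have hbpos : 0 < -b := by linarith
      have := (div_le_iff₀ hbpos).mp h1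
      nlinarith
    have h5 : ⟪p, t • w⟫ = t * f (p, 0) := by
      rw [real_inner_smul_right, hwp]
    simp only [h5]
    have h6 : t * f (p, 0) ≤ t * b := mul_le_mul_of_nonneg_left hgp.le ht0
    have h7 : q ≤ q₀ := hQ hpq
    linarith
end

section
/- Let n, m, N ≥ 1. Let f, f̂ : ℝⁿ → ℝⁿ and g, ĝ : ℝⁿ → ℝ^{n×m}, and set f̃ = f − f̂ and g̃ = g − ĝ. Assume f̃ is Lipschitz with constant L_f ≥ 0 and g̃ is Lipschitz with constant L_g ≥ 0 (with ℝ^{n×m} carrying the operator norm induced by Euclidean norms). Let (x₁, u₁), …, (x_N, u_N) ∈ ℝⁿ × ℝᵐ be data points, and for each i set Fᵢ = f̃(xᵢ) + g̃(xᵢ) uᵢ. Fix x ∈ ℝⁿ, c ∈ ℝⁿ, τ ∈ ℝ, and u ∈ ℝᵐ, and for each i set εᵢ(x) = (L_f + L_g ‖uᵢ‖₂) ‖x − xᵢ‖₂. If ⟨c, f̂(x) + ĝ(x) u + b + A u⟩ ≤ τ holds for every (A, b) ∈ ℝ^{n×m} × ℝⁿ satisfying ‖A uᵢ + b − Fᵢ‖₂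 ≤ εᵢ(x) for all i = 1, …, N, then ⟨c, f(x) + g(x) u⟩ ≤ τ. -/
open scoped RealInnerProductSpace

/-- **Soundness of the DR-CCF-OP controller (Section III).**  With `f̃ = f − f̂`,
`g̃ = g − ĝ` Lipschitz (matrices `ℝ^{n×m}` carrying the operator norm induced by the
Euclidean norms, modelled as continuous linear maps), residuals
`Fᵢ = f̃(xᵢ) + g̃(xᵢ)uᵢ`, and `εᵢ(x) = (L_f + L_g‖uᵢ‖₂)‖x − xᵢ‖₂`:
if `⟨c, f̂(x) + ĝ(x)u + b + Au⟩ ≤ τ` holds for every `(A, b)` with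
`‖Auᵢ + b − Fᵢ‖₂ ≤ εᵢ(x)` for all `i`, then `⟨c, f(x) + g(x)u⟩ ≤ τ`. -/
theorem robust_controller_soundness (n m N : ℕ) (hn : 1 ≤ n) (hm : 1 ≤ m) (hN : 1 ≤ N)
    (f fhat : EuclideanSpace ℝ (Fin n) → EuclideanSpace ℝ (Fin n))
    (g ghat : EuclideanSpace ℝ (Fin n) → (EuclideanSpace ℝ (Fin m) →L[ℝ] EuclideanSpace ℝ (Fin n)))
    (Lf Lg : ℝ) (hLf : 0 ≤ Lf) (hLg : 0 ≤ Lg)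
    (hf : ∀ x y : EuclideanSpace ℝ (Fin n),
      ‖(f x - fhat x) - (f y - fhat y)‖ ≤ Lf * ‖x - y‖)
    (hg : ∀ x y : EuclideanSpace ℝ (Fin n),
      ‖(g x - ghat x) - (g y - ghat y)‖ ≤ Lg * ‖x - y‖)
    (xs : Fin N → EuclideanSpace ℝ (Fin n)) (us : Fin N → EuclideanSpace ℝ (Fin m))
    (x : EuclideanSpace ℝ (Fin n)) (c : EuclideanSpace ℝ (Fin n)) (τ : ℝ)
    (u : EuclideanSpace ℝ (Fin m))
    (hrob : ∀ (A : EuclideanSpace ℝ (Fin m) →L[ℝ] EuclideanSpace ℝ (Fin n))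
        (b : EuclideanSpace ℝ (Fin n)),
      (∀ i, ‖A (us i) + b -
          ((f (xs i) - fhat (xs i)) + (g (xs i) - ghat (xs i)) (us i))‖ ≤
        (Lf + Lg * ‖us i‖) * ‖x - xs i‖) →
      ⟪c, fhat x + ghat x u + b + A u⟫ ≤ τ) :
    ⟪c, f x + g x u⟫ ≤ τ := by
  have h := hrob (g x - ghat x) (f x - fhat x) ?_
  · have : fhat x + ghat x u + (f x - fhat x) + (g x - ghat x) u = f x + g x u := by
      simp [ContinuousLinearMap.sub_apply]; abel
    rwa [this] at h
  · intro i
    have key : (g x - ghat x) (us i) + (f x - fhat x) -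
        ((f (xs i) - fhat (xs i)) + (g (xs i) - ghat (xs i)) (us i))
        = ((f x - fhat x) - (f (xs i) - fhat (xs i))) +
          ((g x - ghat x) - (g (xs i) - ghat (xs i))) (us i) := by
      simp [ContinuousLinearMap.sub_apply]; abel
    rw [key, add_mul]
    calc ‖_ + _‖ ≤ ‖(f x - fhat x) - (f (xs i) - fhat (xs i))‖ +
          ‖((g x - ghat x) - (g (xs i) - ghat (xs i))) (us i)‖ := norm_add_le _ _
      _ ≤ Lf * ‖x - xs i‖ + ‖(g x - ghat x) - (g (xs i) - ghat (xs i))‖ * ‖us i‖ := by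
          gcongr
          · exact hf x (xs i)
          · exact ContinuousLinearMap.le_opNorm _ _
      _ ≤ Lf * ‖x - xs i‖ + Lg * ‖us i‖ * ‖x - xs i‖ := by
          have := hg x (xs i)
          nlinarith [norm_nonneg (us i), norm_nonneg (x - xs i)]
end
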